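/- Let k be a commutative ring, λ ∈ k, Ω a semigroup, and let (R, {P_ω | ω ∈ Ω}) be a Rota–Baxter family algebra of weight λ over k. Let kΩ denote the (non-unital) semigroup algebra of Ω over k, and define the k-linear map P : R ⊗ kΩ → R ⊗ kΩ by P(x ⊗ ω) = P_ω(x) ⊗ ω for x ∈ R and ω ∈ Ω. Then P is a Rota–Baxter operator of weight λ on the algebra R ⊗ kΩ, i.e. P(u)P(v) = P(P(u)v + uP(v) + λuv) for all u, v ∈ R ⊗ kΩ. -/

import Mathlib

open scoped TensorProduct

/-- Let `k` be a commutative ring, `lam ∈ k`, `Ω` a semigroup, and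
`(R, {P_ω | ω ∈ Ω})` a Rota–Baxter family algebra of weight `lam` over `k`.  Let `kΩ`
denote the (non-unital) semigroup algebra `MonoidAlgebra k Ω`, and let
`Q : R ⊗ kΩ → R ⊗ kΩ` be the `k`-linear map with `Q (x ⊗ ω) = P_ω(x) ⊗ ω`.
Then `Q` is a Rota–Baxter operator of weight `lam` on the algebra `R ⊗ kΩ`. -/
theorem rotaBaxterFamily_tensor_monoidAlgebra_isRotaBaxter
    {k R Ω : Type*} [CommRing k] [Ring R] [Algebra k R] [Semigroup Ω]
    (lam : k) (P : Ω → R →ₗ[k] R)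
    (hP : ∀ (α β : Ω) (a b : R),
      P α a * P β b = P (α * β) (P α a * b + a * P β b + lam • (a * b)))
    (Q : R ⊗[k] MonoidAlgebra k Ω →ₗ[k] R ⊗[k] MonoidAlgebra k Ω)
    (hQ : ∀ (x : R) (ω : Ω),
      Q (x ⊗ₜ[k] MonoidAlgebra.single ω (1 : k))
        = (P ω x) ⊗ₜ[k] MonoidAlgebra.single ω (1 : k)) :
    ∀ u v : R ⊗[k] MonoidAlgebra k Ω,
      Q u * Q v = Q (Q u * v + u * Q v + lam • (u * v)) := by
  set G : Set (R ⊗[k] MonoidAlgebra k Ω) :=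
    {z | ∃ x ω, z = x ⊗ₜ[k] MonoidAlgebra.single ω (1 : k)} with hG
  -- the pure tensors `x ⊗ single ω 1` span everything
  have hspan : ∀ u : R ⊗[k] MonoidAlgebra k Ω, u ∈ Submodule.span k G := by
    intro u
    induction u using TensorProduct.induction_on with
    | zero => exact Submodule.zero_mem _
    | tmul x f =>
        induction f using MonoidAlgebra.induction with
        | zero => simp
        | single_add a b f haf hb ih =>
            rw [TensorProduct.tmul_add]
            refine Submodule.add_mem _ ?_ ih
            have h1 : (x ⊗ₜ[k] (MonoidAlgebra.single a b) : R ⊗[k] MonoidAlgebra k Ω)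
                = b • (x ⊗ₜ[k] MonoidAlgebra.single a (1 : k)) := by
              rw [← TensorProduct.tmul_smul]
              congr 1
              simp [MonoidAlgebra.smul_single']
            rw [h1]
            exact Submodule.smul_mem _ _ (Submodule.subset_span ⟨x, a, rfl⟩)
    | add u v hu hv => exact Submodule.add_mem _ hu hv
  -- the identity on generators
  have key : ∀ (x y : R) (α β : Ω),
      Q (x ⊗ₜ[k] MonoidAlgebra.single α (1 : k)) *
          Q (y ⊗ₜ[k] MonoidAlgebra.single β (1 : k))
        = Q (Q (x ⊗ₜ[k] MonoidAlgebra.single α (1 : k)) *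
              (y ⊗ₜ[k] MonoidAlgebra.single β (1 : k))
            + (x ⊗ₜ[k] MonoidAlgebra.single α (1 : k)) *
              Q (y ⊗ₜ[k] MonoidAlgebra.single β (1 : k))
            + lam • ((x ⊗ₜ[k] MonoidAlgebra.single α (1 : k)) *
              (y ⊗ₜ[k] MonoidAlgebra.single β (1 : k)))) := by
    intro x y α β
    rw [hQ, hQ]
    simp only [Algebra.TensorProduct.tmul_mul_tmul, MonoidAlgebra.single_mul_single, one_mul]
    rw [hP, TensorProduct.smul_tmul', ← TensorProduct.add_tmul, ← TensorProduct.add_tmul, hQ]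
  intro u v
  have hu := hspan u
  have hv := hspan v
  induction hu using Submodule.span_induction with
  | mem z hz =>
      obtain ⟨x, α, rfl⟩ := hz
      induction hv using Submodule.span_induction with
      | mem w hw =>
          obtain ⟨y, β, rfl⟩ := hw
          exact key x y α β
      | zero => simp
      | add a b ha hb iha ihb =>
          rw [map_add, mul_add, iha, ihb, ← map_add]
          congr 1
          simp only [mul_add, smul_add]
          abel
      | smul c a ha iha =>
          rw [map_smul, mul_smul_comm, iha, ← map_smul]
          congr 1
          simp only [mul_smul_comm, smul_add, smul_smul, mul_comm lam c]
  | zero => simp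
  | add a b ha hb iha ihb =>
      rw [map_add, add_mul, iha, ihb, ← map_add]
      congr 1
      simp only [add_mul, smul_add]
      abel
  | smul c a ha iha =>
      rw [map_smul, smul_mul_assoc, iha, ← map_smul]
      congr 1
      simp only [smul_mul_assoc, smul_add, smul_smul, mul_comm lam c]
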